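/- Let {D_0,D_1,D_2,D_3} be a difference family of type H in a finite abelian group G of order v such that every x ∈ G∖{0} has coefficient 1 or 3 in D_0+D_1+D_2+D_3 (as an element of ℤ[G], with coefficient of 0 being 0), and each D_i is symmetric, and (d3) holds. Then there exist symmetric subsets E_0, E_1 of G∖{0} with D_0+D_1−D_2−D_3 = E_0 − (G*∖E_0) and D_0+D_3−D_1−D_2 = E_1 − (G*∖E_1), and moreover E_0² + E_1² + (G*∖E_0)² + (G*∖E_1)² = 2(v−1)·0 + (v−3)·G* in ℤ[G], i.e., {E_0, E_1, G*∖E_0, G*∖E_1} is a difference family of type H_4*. -/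

import Mathlib

open Finset

noncomputable section

variable {G : Type*}

/-- The element of the group ring `ℤ[G]` associated to a finite subset `D ⊆ G`. -/
def grp [AddCommGroup G] [DecidableEq G] (D : Finset G) : AddMonoidAlgebra ℤ G :=
  ∑ x ∈ D, AddMonoidAlgebra.single x 1

/-- `D^{(-1)} = {-x : x ∈ D}`. -/
def negSet [AddCommGroup G] [DecidableEq G] (D : Finset G) : Finset G :=
  D.image (fun x => -x)

/-- A subset is symmetric if `D = -D`. -/
def IsSymmetric [AddCommGroup G] [DecidableEq G] (D : Finset G) : Prop :=
  negSet D = D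

/-- `G* = G \ {0}` as a finset. -/
def Gstar (G : Type*) [AddCommGroup G] [Fintype G] [DecidableEq G] : Finset G :=
  Finset.univ \ {0}

/-- A difference family of type `H`: four blocks with `λ = Σ|D_i| - |G|`. -/
def IsTypeH [AddCommGroup G] [Fintype G] [DecidableEq G] (D : Fin 4 → Finset G) : Prop :=
  ∑ i, grp (D i) * grp (negSet (D i)) =
    ((∑ i, ((D i).card : ℤ)) - (Fintype.card G : ℤ)) • grp (Finset.univ : Finset G)
      + (Fintype.card G : ℤ) • AddMonoidAlgebra.single (0 : G) (1 : ℤ)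

/-- A difference family of type `H_4^*`: four blocks with `λ = Σ|B_i| - (|G|+1)`. -/
def IsTypeH4star [AddCommGroup G] [Fintype G] [DecidableEq G] (B : Fin 4 → Finset G) : Prop :=
  ∑ i, grp (B i) * grp (negSet (B i)) =
    ((∑ i, ((B i).card : ℤ)) - ((Fintype.card G : ℤ) + 1)) • grp (Finset.univ : Finset G)
      + ((Fintype.card G : ℤ) + 1) • AddMonoidAlgebra.single (0 : G) (1 : ℤ)

/-- A difference family of type `H_2^*`: two blocks with `λ = Σ|S_i| - (|G|+1)/2`. -/
def IsTypeH2star [AddCommGroup G] [Fintype G] [DecidableEq G] (S : Fin 2 → Finset G) : Prop :=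
  ∑ i, grp (S i) * grp (negSet (S i)) =
    ((∑ i, ((S i).card : ℤ)) - ((Fintype.card G : ℤ) + 1) / 2) • grp (Finset.univ : Finset G)
      + (((Fintype.card G : ℤ) + 1) / 2) • AddMonoidAlgebra.single (0 : G) (1 : ℤ)

/-- Condition (d3). -/
def CondD3 [AddCommGroup G] [Fintype G] [DecidableEq G] (D : Fin 4 → Finset G) : Prop :=
  grp (D 0) * grp (negSet (D 2)) + grp (D 2) * grp (negSet (D 0))
    + grp (D 1) * grp (negSet (D 3)) + grp (D 3) * grp (negSet (D 1)) =
    ((∑ i, ((D i).card : ℤ)) - (Fintype.card G : ℤ) + 1) • grp (Finset.univ : Finset G)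

/-- Condition (c1). -/
def CondC1 [AddCommGroup G] [Fintype G] [DecidableEq G] (S : Fin 4 → Finset G) : Prop :=
  grp (S 0) * grp (negSet (S 2)) + grp (S 2) * grp (negSet (S 0))
    + grp (S 1) * grp (negSet (S 3)) + grp (S 3) * grp (negSet (S 1)) =
    ((∑ i, ((S i).card : ℤ)) - (Fintype.card G : ℤ)) • grp (Finset.univ : Finset G)

/-- Condition (d2). -/
def CondD2 [AddCommGroup G] [Fintype G] [DecidableEq G] (D : Fin 4 → Finset G) : Prop :=
  ∃ E₀ E₁ : Finset G, E₀ ⊆ Gstar G ∧ E₁ ⊆ Gstar G ∧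
    grp (D 0) + grp (D 1) - grp (D 2) - grp (D 3) = grp E₀ - grp (Gstar G \ E₀) ∧
    grp (D 0) + grp (D 3) - grp (D 1) - grp (D 2) = grp E₁ - grp (Gstar G \ E₁) ∧
    IsTypeH4star ![E₀, E₁, Gstar G \ E₀, Gstar G \ E₁]

/-- A building family: eight symmetric, pairwise disjoint subsets partitioning `G*`,
satisfying (a3) and (a4). -/
def IsBuildingFamily [AddCommGroup G] [Fintype G] [DecidableEq G] (A : Fin 8 → Finset G) : Prop :=
  (∀ i, IsSymmetric (A i)) ∧
  (∀ i j, i ≠ j → Disjoint (A i) (A j)) ∧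
  (Finset.univ.biUnion A = Gstar G) ∧
  IsTypeH4star ![A 0 ∪ A 1 ∪ A 6 ∪ A 7, A 2 ∪ A 3 ∪ A 4 ∪ A 5,
    A 0 ∪ A 3 ∪ A 5 ∪ A 6, A 1 ∪ A 2 ∪ A 4 ∪ A 7] ∧
  (∑ i, grp (A i) * grp (A i)) - (∑ i, grp (A i) * grp (A (i + 4))) =
    ((Fintype.card G : ℤ) - 1) • AddMonoidAlgebra.single (0 : G) (1 : ℤ)
      + ((grp (A 0) + grp (A 1) + grp (A 2) + grp (A 3))
        - (grp (A 4) + grp (A 5) + grp (A 6) + grp (A 7)))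

end

-- ===== auxiliary lemmas =====
section Aux
variable {G : Type*} [AddCommGroup G] [DecidableEq G]

lemma grp_apply (D : Finset G) (x : G) : (grp D).coeff x = if x ∈ D then 1 else 0 := by
  classical
  rw [grp]
  rw [AddMonoidAlgebra.coeff_sum, Finset.sum_apply']
  simp [Finsupp.single_apply]

lemma addMA_add_apply (f g : AddMonoidAlgebra ℤ G) (x : G) : (f + g).coeff x = f.coeff x + g.coeff x := by
  rw [AddMonoidAlgebra.coeff_add, Finsupp.add_apply]

lemma addMA_sub_apply (f g : AddMonoidAlgebra ℤ G) (x : G) : (f - g).coeff x = f.coeff x - g.coeff x := by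
  rw [AddMonoidAlgebra.coeff_sub, Finsupp.sub_apply]

lemma mem_negSet' {D : Finset G} {x : G} : x ∈ negSet D ↔ -x ∈ D := by
  simp only [negSet, Finset.mem_image]
  constructor
  · rintro ⟨a, ha, rfl⟩; simpa
  · intro h; exact ⟨-x, h, by simp⟩

lemma grp_sdiff {E S : Finset G} (h : E ⊆ S) : grp (S \ E) = grp S - grp E := by
  rw [eq_sub_iff_add_eq, grp, grp, grp, Finset.sum_sdiff h]

lemma zsmul_cancel4 {a b : AddMonoidAlgebra ℤ G} (h : (4:ℤ) • a = (4:ℤ) • b) : a = b := by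
  ext x
  have h2 : ((4:ℤ) • a).coeff x = ((4:ℤ) • b).coeff x := by rw [h]
  rw [AddMonoidAlgebra.coeff_smul, AddMonoidAlgebra.coeff_smul, Finsupp.smul_apply,
    Finsupp.smul_apply] at h2
  simpa using h2

variable [Fintype G]

lemma single_mul_grp_univ (x : G) :
    AddMonoidAlgebra.single x (1:ℤ) * grp (Finset.univ : Finset G) = grp Finset.univ := by
  rw [grp, Finset.mul_sum]
  have h1 : ∀ i : G, AddMonoidAlgebra.single x (1:ℤ) * AddMonoidAlgebra.single i 1
      = AddMonoidAlgebra.single (x + i) 1 := fun i => by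
    rw [AddMonoidAlgebra.single_mul_single, one_mul]
  simp_rw [h1]
  exact Fintype.sum_equiv (Equiv.addLeft x) _ _ (fun i => rfl)

lemma grp_univ_mul_grp_univ :
    grp (Finset.univ : Finset G) * grp Finset.univ
      = (Fintype.card G : ℤ) • grp (Finset.univ : Finset G) := by
  nth_rewrite 1 [grp]
  rw [Finset.sum_mul]
  rw [Finset.sum_congr rfl (fun x _ => single_mul_grp_univ x)]
  rw [Finset.sum_const, Finset.card_univ, natCast_zsmul]

lemma grp_Gstar : grp (Gstar G) = grp (Finset.univ : Finset G) - 1 := by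
  rw [Gstar, grp, grp, eq_sub_iff_add_eq,
    show (1 : AddMonoidAlgebra ℤ G) = AddMonoidAlgebra.single 0 1 from AddMonoidAlgebra.one_def]
  rw [← Finset.sum_singleton (f := fun x : G => AddMonoidAlgebra.single x (1:ℤ)) 0]
  exact Finset.sum_sdiff (by simp)

end Aux

/-- existence of the witness sets `E₀, E₁` of condition (d2) from the
coefficient condition and (d3), for a symmetric type-`H` family. -/
theorem d2_witnesses_exist {G : Type*} [AddCommGroup G] [Fintype G] [DecidableEq G]
    (D : Fin 4 → Finset G)
    (hsym : ∀ i, IsSymmetric (D i)) (hH : IsTypeH D)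
    (hcoeff : ∀ x : G, x ≠ 0 → (∑ i, grp (D i)).coeff x = 1 ∨ (∑ i, grp (D i)).coeff x = 3)
    (hcoeff0 : (∑ i, grp (D i)).coeff (0 : G) = 0)
    (hd3 : CondD3 D) :
    ∃ E₀ E₁ : Finset G, IsSymmetric E₀ ∧ IsSymmetric E₁ ∧ E₀ ⊆ Gstar G ∧ E₁ ⊆ Gstar G ∧
      grp (D 0) + grp (D 1) - grp (D 2) - grp (D 3) = grp E₀ - grp (Gstar G \ E₀) ∧
      grp (D 0) + grp (D 3) - grp (D 1) - grp (D 2) = grp E₁ - grp (Gstar G \ E₁) ∧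
      grp E₀ * grp E₀ + grp E₁ * grp E₁
          + grp (Gstar G \ E₀) * grp (Gstar G \ E₀)
          + grp (Gstar G \ E₁) * grp (Gstar G \ E₁) =
        (2 * ((Fintype.card G : ℤ) - 1)) • AddMonoidAlgebra.single (0 : G) (1 : ℤ)
          + ((Fintype.card G : ℤ) - 3) • grp (Gstar G)  := by
  classical
  have hsym' : ∀ i, negSet (D i) = D i := hsym
  -- coefficient helpers
  have hsumx : ∀ x : G, (∑ i, grp (D i)).coeff x
      = (grp (D 0)).coeff x + (grp (D 1)).coeff x + (grp (D 2)).coeff x + (grp (D 3)).coeff x := by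
    intro x
    rw [Fin.sum_univ_four, addMA_add_apply, addMA_add_apply, addMA_add_apply]
  have hF0x : ∀ x : G, (grp (D 0) + grp (D 1) - grp (D 2) - grp (D 3)).coeff x
      = (grp (D 0)).coeff x + (grp (D 1)).coeff x - (grp (D 2)).coeff x - (grp (D 3)).coeff x := by
    intro x
    rw [addMA_sub_apply, addMA_sub_apply, addMA_add_apply]
  have hF1x : ∀ x : G, (grp (D 0) + grp (D 3) - grp (D 1) - grp (D 2)).coeff x
      = (grp (D 0)).coeff x + (grp (D 3)).coeff x - (grp (D 1)).coeff x - (grp (D 2)).coeff x := by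
    intro x
    rw [addMA_sub_apply, addMA_sub_apply, addMA_add_apply]
  have key : ∀ x : G, x ≠ 0 →
      ((grp (D 0) + grp (D 1) - grp (D 2) - grp (D 3)).coeff x = 1
        ∨ (grp (D 0) + grp (D 1) - grp (D 2) - grp (D 3)).coeff x = -1) ∧
      ((grp (D 0) + grp (D 3) - grp (D 1) - grp (D 2)).coeff x = 1
        ∨ (grp (D 0) + grp (D 3) - grp (D 1) - grp (D 2)).coeff x = -1) := by
    intro x hx
    have h := hcoeff x hx
    rw [hsumx x] at h
    rw [hF0x x, hF1x x]
    simp only [grp_apply] at h ⊢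
    split_ifs at h ⊢ <;> omega
  have key0 : (grp (D 0) + grp (D 1) - grp (D 2) - grp (D 3)).coeff (0:G) = 0
      ∧ (grp (D 0) + grp (D 3) - grp (D 1) - grp (D 2)).coeff (0:G) = 0 := by
    have h := hcoeff0
    rw [hsumx 0] at h
    rw [hF0x 0, hF1x 0]
    simp only [grp_apply] at h ⊢
    split_ifs at h ⊢ <;> omega
  -- symmetry of coefficients
  have hmemD : ∀ (i : Fin 4) (x : G), -x ∈ D i ↔ x ∈ D i := by
    intro i x
    conv_rhs => rw [← hsym' i]
    rw [mem_negSet']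
  have hFsym0 : ∀ x : G, (grp (D 0) + grp (D 1) - grp (D 2) - grp (D 3)).coeff (-x)
      = (grp (D 0) + grp (D 1) - grp (D 2) - grp (D 3)).coeff x := by
    intro x
    rw [hF0x, hF0x]
    simp only [grp_apply, hmemD]
  have hFsym1 : ∀ x : G, (grp (D 0) + grp (D 3) - grp (D 1) - grp (D 2)).coeff (-x)
      = (grp (D 0) + grp (D 3) - grp (D 1) - grp (D 2)).coeff x := by
    intro x
    rw [hF1x, hF1x]
    simp only [grp_apply, hmemD]
  -- the witness sets
  set E₀ : Finset G :=
    (Gstar G).filter (fun x => (grp (D 0) + grp (D 1) - grp (D 2) - grp (D 3)).coeff x = 1) with hE₀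
  set E₁ : Finset G :=
    (Gstar G).filter (fun x => (grp (D 0) + grp (D 3) - grp (D 1) - grp (D 2)).coeff x = 1) with hE₁
  have hmemGstar : ∀ x : G, x ∈ Gstar G ↔ x ≠ 0 := by
    intro x; simp [Gstar]
  have hsub0 : E₀ ⊆ Gstar G := Finset.filter_subset _ _
  have hsub1 : E₁ ⊆ Gstar G := Finset.filter_subset _ _
  have hsymE0 : IsSymmetric E₀ := by
    show negSet E₀ = E₀
    ext y
    rw [mem_negSet', hE₀, Finset.mem_filter, Finset.mem_filter, hmemGstar, hmemGstar,
      neg_ne_zero, hFsym0 y]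
  have hsymE1 : IsSymmetric E₁ := by
    show negSet E₁ = E₁
    ext y
    rw [mem_negSet', hE₁, Finset.mem_filter, Finset.mem_filter, hmemGstar, hmemGstar,
      neg_ne_zero, hFsym1 y]
  have hd20 : grp (D 0) + grp (D 1) - grp (D 2) - grp (D 3) = grp E₀ - grp (Gstar G \ E₀) := by
    ext x
    conv_rhs => rw [addMA_sub_apply, grp_apply, grp_apply]
    by_cases hx : x = 0
    · subst hx
      have h0 : (0:G) ∉ Gstar G := by simp [Gstar]
      rw [key0.1, if_neg (fun h => h0 (hsub0 h)), if_neg (by simp [Finset.mem_sdiff, h0])]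
      ring
    · rcases (key x hx).1 with h1 | h1
      · have hxE : x ∈ E₀ := Finset.mem_filter.2 ⟨(hmemGstar x).2 hx, h1⟩
        rw [h1, if_pos hxE, if_neg (by simp [Finset.mem_sdiff, hxE])]
        norm_num
      · have hxE : x ∉ E₀ := by
          intro h
          rw [hE₀, Finset.mem_filter] at h
          omega
        rw [h1, if_neg hxE, if_pos (Finset.mem_sdiff.2 ⟨(hmemGstar x).2 hx, hxE⟩)]
        norm_num
  have hd21 : grp (D 0) + grp (D 3) - grp (D 1) - grp (D 2) = grp E₁ - grp (Gstar G \ E₁) := by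
    ext x
    conv_rhs => rw [addMA_sub_apply, grp_apply, grp_apply]
    by_cases hx : x = 0
    · subst hx
      have h0 : (0:G) ∉ Gstar G := by simp [Gstar]
      rw [key0.2, if_neg (fun h => h0 (hsub1 h)), if_neg (by simp [Finset.mem_sdiff, h0])]
      ring
    · rcases (key x hx).2 with h1 | h1
      · have hxE : x ∈ E₁ := Finset.mem_filter.2 ⟨(hmemGstar x).2 hx, h1⟩
        rw [h1, if_pos hxE, if_neg (by simp [Finset.mem_sdiff, hxE])]
        norm_num
      · have hxE : x ∉ E₁ := by
          intro h
          rw [hE₁, Finset.mem_filter] at h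
          omega
        rw [h1, if_neg hxE, if_pos (Finset.mem_sdiff.2 ⟨(hmemGstar x).2 hx, hxE⟩)]
        norm_num
  refine ⟨E₀, E₁, hsymE0, hsymE1, hsub0, hsub1, hd20, hd21, ?_⟩
  -- the quadratic identity
  unfold IsTypeH at hH
  unfold CondD3 at hd3
  simp only [hsym'] at hH hd3
  simp only [Fin.sum_univ_four] at hH hd3
  have hg0 : grp (Gstar G \ E₀) = grp (Finset.univ : Finset G) - 1 - grp E₀ := by
    rw [grp_sdiff hsub0, grp_Gstar]
  have hg1 : grp (Gstar G \ E₁) = grp (Finset.univ : Finset G) - 1 - grp E₁ := by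
    rw [grp_sdiff hsub1, grp_Gstar]
  have he0 : 2 * grp E₀ = (grp (D 0) + grp (D 1) - grp (D 2) - grp (D 3))
      + grp (Finset.univ : Finset G) - 1 := by
    rw [hd20, hg0]; ring
  have he1 : 2 * grp E₁ = (grp (D 0) + grp (D 3) - grp (D 1) - grp (D 2))
      + grp (Finset.univ : Finset G) - 1 := by
    rw [hd21, hg1]; ring
  have hUU : grp (Finset.univ : Finset G) * grp (Finset.univ : Finset G)
      = ((Fintype.card G : ℤ) : AddMonoidAlgebra ℤ G) * grp (Finset.univ : Finset G) := by
    rw [grp_univ_mul_grp_univ, zsmul_eq_mul]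
  rw [show (AddMonoidAlgebra.single (0:G) (1:ℤ)) = 1 from AddMonoidAlgebra.one_def.symm] at hH ⊢
  rw [grp_Gstar]
  rw [hg0, hg1]
  apply zsmul_cancel4
  simp only [zsmul_eq_mul] at hH hd3 ⊢
  push_cast at hH hd3 ⊢
  linear_combination (4 * grp E₀ + 2 * (grp (D 0) + grp (D 1) - grp (D 2) - grp (D 3))
        - 2 * grp (Finset.univ : Finset G) + 2) * he0
    + (4 * grp E₁ + 2 * (grp (D 0) + grp (D 3) - grp (D 1) - grp (D 2))
        - 2 * grp (Finset.univ : Finset G) + 2) * he1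
    + 4 * hH - 4 * hd3 + 4 * hUU
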